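/- Let k ≥ 2 be an integer, σ > 0, D_k > 0, and C_k' > 0 be reals, and let δ ≥ 0 be a real that is not an integer. For each i = 1, …, k−1, let T_i > 0 and C_i > 0 be reals such that ⌈(D_k + δ·T_i)/T_i⌉ > ⌈δ⌉ + 1, and set g_i = ⌊(D_k + δ·T_i)/T_i⌋, t_i = (g_i − δ)·T_i, α_i = σ·g_i/(g_i − δ), and β_i = σ/(g_i − δ). Then every g_i is an integer with g_i > δ + 1, and 0 < α_i ≤ σ·(⌈δ⌉ + 1)/(⌈δ⌉ + 1 − δ) and 0 < β_i ≤ σ/(⌈δ⌉ + 1 − δ) for every i. Moreover, with t_k = D_k and the tasks indexed so that t_1 ≤ ⋯ ≤ t_{k−1}, if there exists j ∈ {1, …, k} with C_k' + Σ_{i=1}^{k−1} α_i·t_i·U_i + Σ_{i=1}^{j−1} β_i·t_i·U_i ≤ t_j (where U_i = C_i/T_i), then there exists t with 0 < t ≤ D_k and C_k' + Σ_{i=1}^{k−1} σ·⌈(t + δ·T_i)/T_i⌉·C_i ≤ t. -/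

import Mathlib

open Finset

theorem arrival_jitter_k2u_parameters_refined
    (k : ℕ) (hk : 2 ≤ k) (σ Dk Ck' δ : ℝ)
    (hσ : 0 < σ) (hDk : 0 < Dk) (hCk' : 0 < Ck') (hδ : 0 ≤ δ)
    (hδint : ∀ n : ℤ, (n : ℝ) ≠ δ)
    (T C : ℕ → ℝ)
    (hT : ∀ i ∈ Finset.Icc 1 (k - 1), 0 < T i)
    (hC : ∀ i ∈ Finset.Icc 1 (k - 1), 0 < C i)
    (hhp1 : ∀ i ∈ Finset.Icc 1 (k - 1), ⌈δ⌉ + 1 < ⌈(Dk + δ * T i) / T i⌉)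
    (U : ℕ → ℝ) (hU : ∀ i ∈ Finset.Icc 1 (k - 1), U i = C i / T i)
    (g : ℕ → ℤ) (hg : ∀ i ∈ Finset.Icc 1 (k - 1), g i = ⌊(Dk + δ * T i) / T i⌋)
    (t : ℕ → ℝ) (ht : ∀ i ∈ Finset.Icc 1 (k - 1), t i = ((g i : ℝ) - δ) * T i)
    (htk : t k = Dk)
    (hmono : ∀ i ∈ Finset.Icc 1 (k - 1), ∀ j ∈ Finset.Icc 1 (k - 1), i ≤ j → t i ≤ t j)
    (A B : ℕ → ℝ)
    (hA : ∀ i ∈ Finset.Icc 1 (k - 1), A i = σ * (g i : ℝ) / ((g i : ℝ) - δ))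
    (hB : ∀ i ∈ Finset.Icc 1 (k - 1), B i = σ / ((g i : ℝ) - δ)) :
    (∀ i ∈ Finset.Icc 1 (k - 1), δ + 1 < (g i : ℝ)) ∧
    (∀ i ∈ Finset.Icc 1 (k - 1),
      (0 < A i ∧ A i ≤ σ * ((⌈δ⌉ : ℝ) + 1) / ((⌈δ⌉ : ℝ) + 1 - δ)) ∧
      (0 < B i ∧ B i ≤ σ / ((⌈δ⌉ : ℝ) + 1 - δ))) ∧
    ((∃ j ∈ Finset.Icc 1 k,
        Ck' + (∑ i ∈ Finset.Icc 1 (k - 1), A i * t i * U i)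
          + (∑ i ∈ Finset.Icc 1 (j - 1), B i * t i * U i) ≤ t j) →
      ∃ t' : ℝ, 0 < t' ∧ t' ≤ Dk ∧
        Ck' + ∑ i ∈ Finset.Icc 1 (k - 1), σ * (⌈(t' + δ * T i) / T i⌉ : ℝ) * C i ≤ t') := by
  have hceil : δ < ((⌈δ⌉ : ℤ) : ℝ) := lt_of_le_of_ne (Int.le_ceil δ) (Ne.symm (hδint ⌈δ⌉))
  have hgZ : ∀ i ∈ Finset.Icc 1 (k - 1), (⌈δ⌉ + 1 : ℤ) ≤ g i := by
    intro i hi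
    have h1 := hhp1 i hi
    have h2 := Int.ceil_le_floor_add_one ((Dk + δ * T i) / T i)
    rw [hg i hi]; omega
  have hgR : ∀ i ∈ Finset.Icc 1 (k - 1), ((⌈δ⌉ : ℤ) : ℝ) + 1 ≤ (g i : ℝ) := by
    intro i hi
    have := hgZ i hi
    have h : ((⌈δ⌉ + 1 : ℤ) : ℝ) ≤ (g i : ℝ) := by exact_mod_cast this
    push_cast at h; linarith
  have hgδ : ∀ i ∈ Finset.Icc 1 (k - 1), δ + 1 < (g i : ℝ) := by
    intro i hi
    have := hgR i hi
    linarith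
  have hgd : ∀ i ∈ Finset.Icc 1 (k - 1), 0 < (g i : ℝ) - δ := by
    intro i hi; have := hgδ i hi; linarith
  have htpos : ∀ i ∈ Finset.Icc 1 (k - 1), 0 < t i := by
    intro i hi
    rw [ht i hi]
    have h1 := hgd i hi
    have h2 := hT i hi
    positivity
  have htle : ∀ i ∈ Finset.Icc 1 (k - 1), t i ≤ Dk := by
    intro i hi
    rw [ht i hi]
    have hTi := hT i hi
    have hfl : (g i : ℝ) ≤ (Dk + δ * T i) / T i := by
      rw [hg i hi]; exact Int.floor_le _
    have h := (le_div_iff₀ hTi).mp hfl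
    nlinarith
  have hAeq : ∀ i ∈ Finset.Icc 1 (k - 1), A i * t i * U i = σ * (g i : ℝ) * C i := by
    intro i hi
    rw [hA i hi, ht i hi, hU i hi]
    have hTi := (hT i hi).ne'
    have hgi := (hgd i hi).ne'
    field_simp
  have hBeq : ∀ i ∈ Finset.Icc 1 (k - 1), B i * t i * U i = σ * C i := by
    intro i hi
    rw [hB i hi, ht i hi, hU i hi]
    have hTi := (hT i hi).ne'
    have hgi := (hgd i hi).ne'
    field_simp
  refine ⟨hgδ, ?_, ?_⟩
  · intro i hi
    have hG := hgδ i hi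
    have hGZ := hgR i hi
    have hGd := hgd i hi
    have hmd : 0 < ((⌈δ⌉ : ℤ) : ℝ) + 1 - δ := by linarith
    refine ⟨⟨?_, ?_⟩, ?_, ?_⟩
    · rw [hA i hi]
      apply div_pos (by nlinarith) hGd
    · rw [hA i hi, div_le_div_iff₀ hGd hmd]
      nlinarith [mul_nonneg (mul_nonneg hσ.le hδ) (sub_nonneg.mpr hGZ)]
    · rw [hB i hi]; exact div_pos hσ hGd
    · rw [hB i hi, div_le_div_iff₀ hGd hmd]
      nlinarith
  · rintro ⟨j, hj, hsum⟩
    rw [Finset.mem_Icc] at hj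
    have htjmem : j = k ∨ j ∈ Finset.Icc 1 (k - 1) := by
      rcases eq_or_lt_of_le hj.2 with h | h
      · left; exact h
      · right; rw [Finset.mem_Icc]; omega
    have htj0 : 0 < t j := by
      rcases htjmem with h | h
      · rw [h, htk]; exact hDk
      · exact htpos j h
    have htjD : t j ≤ Dk := by
      rcases htjmem with h | h
      · rw [h, htk]
      · exact htle j h
    refine ⟨t j, htj0, htjD, ?_⟩
    have hsplit : ∀ f : ℕ → ℝ, ∑ i ∈ Finset.Icc 1 (k - 1), f i
        = ∑ i ∈ Finset.Icc 1 (j - 1), f i + ∑ i ∈ Finset.Icc j (k - 1), f i := by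
      intro f
      have h1 : Finset.Icc 1 (k - 1) = Finset.Ioc 0 (k - 1) := Finset.Icc_add_one_left_eq_Ioc 0 (k - 1)
      have h2 : Finset.Icc 1 (j - 1) = Finset.Ioc 0 (j - 1) := Finset.Icc_add_one_left_eq_Ioc 0 (j - 1)
      have h3 : Finset.Icc j (k - 1) = Finset.Ioc (j - 1) (k - 1) := by
        rw [← Finset.Icc_add_one_left_eq_Ioc]; congr 1; omega
      rw [h1, h2, h3, Finset.sum_Ioc_consecutive f (by omega) (by omega)]
    have key : ∑ i ∈ Finset.Icc 1 (k - 1), σ * (⌈(t j + δ * T i) / T i⌉ : ℝ) * C i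
        ≤ (∑ i ∈ Finset.Icc 1 (k - 1), A i * t i * U i)
          + ∑ i ∈ Finset.Icc 1 (j - 1), B i * t i * U i := by
      rw [hsplit (fun i => σ * (⌈(t j + δ * T i) / T i⌉ : ℝ) * C i),
        hsplit (fun i => A i * t i * U i)]
      have S1 : ∑ i ∈ Finset.Icc 1 (j - 1), σ * (⌈(t j + δ * T i) / T i⌉ : ℝ) * C i
          ≤ ∑ i ∈ Finset.Icc 1 (j - 1), (A i * t i * U i + B i * t i * U i) := by
        apply Finset.sum_le_sum
        intro i hi
        rw [Finset.mem_Icc] at hi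
        have hm : i ∈ Finset.Icc 1 (k - 1) := by rw [Finset.mem_Icc]; omega
        have hTi := hT i hm
        have hCi := hC i hm
        have hc : ⌈(t j + δ * T i) / T i⌉ ≤ g i + 1 := by
          have hle : (t j + δ * T i) / T i ≤ (Dk + δ * T i) / T i := by
            rw [div_le_div_iff₀ hTi hTi]; nlinarith
          calc ⌈(t j + δ * T i) / T i⌉ ≤ ⌈(Dk + δ * T i) / T i⌉ := Int.ceil_le_ceil hle
            _ ≤ ⌊(Dk + δ * T i) / T i⌋ + 1 := Int.ceil_le_floor_add_one _
            _ = g i + 1 := by rw [hg i hm]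
        have hcR : ((⌈(t j + δ * T i) / T i⌉ : ℤ) : ℝ) ≤ (g i : ℝ) + 1 := by
          exact_mod_cast hc
        rw [hAeq i hm, hBeq i hm]
        nlinarith [mul_nonneg (mul_nonneg hσ.le hCi.le) (sub_nonneg.mpr hcR)]
      have S2 : ∑ i ∈ Finset.Icc j (k - 1), σ * (⌈(t j + δ * T i) / T i⌉ : ℝ) * C i
          ≤ ∑ i ∈ Finset.Icc j (k - 1), A i * t i * U i := by
        apply Finset.sum_le_sum
        intro i hi
        rw [Finset.mem_Icc] at hi
        have hm : i ∈ Finset.Icc 1 (k - 1) := by rw [Finset.mem_Icc]; omega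
        have hjm : j ∈ Finset.Icc 1 (k - 1) := by rw [Finset.mem_Icc]; omega
        have hTi := hT i hm
        have hCi := hC i hm
        have htji : t j ≤ t i := hmono j hjm i hm hi.1
        have hti : t i = ((g i : ℝ) - δ) * T i := ht i hm
        have hc : ⌈(t j + δ * T i) / T i⌉ ≤ g i := by
          apply Int.ceil_le.mpr
          rw [div_le_iff₀ hTi]
          nlinarith
        have hcR : ((⌈(t j + δ * T i) / T i⌉ : ℤ) : ℝ) ≤ (g i : ℝ) := by exact_mod_cast hc
        rw [hAeq i hm]
        nlinarith [mul_nonneg (mul_nonneg hσ.le hCi.le) (sub_nonneg.mpr hcR)]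
      rw [Finset.sum_add_distrib] at S1
      linarith
    linarith
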